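/- Let Z be a real Banach space, let X and Y be infinite-dimensional closed linear subspaces of Z, and let ε > 0 be such that the Hausdorff distance in Z between the closed unit balls B_X and B_Y is less than ε. Let (x_i)_{i∈ℕ} and (y_i)_{i∈ℕ} be dense sequences in the unit spheres S_X of X and S_Y of Y, respectively. Then there exists a bijection π : ℕ → ℕ such that for every finite set F ⊆ ℕ and every choice of signs (δ_i)_{i∈F} ∈ {−1,1}^F one has |‖Σ_{i∈F} δ_i x_i‖ − ‖Σ_{i∈F} δ_i y_{π(i)}‖| < 2|F|ε. -/

import Mathlib

open Classical

noncomputable def nextPair (R : ℕ → ℕ → Prop)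
    (h1 : ∀ i, {j | R i j}.Infinite) (h2 : ∀ j, {i | R i j}.Infinite)
    (L : List (ℕ × ℕ)) (n : ℕ) : ℕ × ℕ :=
  if n % 2 = 0 then
    let i := sInf {i | i ∉ L.map Prod.fst}
    (i, (((h1 i).diff (L.map Prod.snd).finite_toSet).nonempty).choose)
  else
    let j := sInf {j | j ∉ L.map Prod.snd}
    ((((h2 j).diff (L.map Prod.fst).finite_toSet).nonempty).choose, j)

lemma compl_nonempty (l : List ℕ) : {i : ℕ | i ∉ l}.Nonempty := by
  have : {i : ℕ | i ∈ l}ᶜ.Infinite := (l.finite_toSet).infinite_compl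
  exact this.nonempty

lemma sInf_not_mem (l : List ℕ) : sInf {i : ℕ | i ∉ l} ∉ l :=
  Nat.sInf_mem (compl_nonempty l)

lemma nextPair_spec (R : ℕ → ℕ → Prop) (h1 : ∀ i, {j | R i j}.Infinite)
    (h2 : ∀ j, {i | R i j}.Infinite) (L : List (ℕ × ℕ)) (n : ℕ) :
    R (nextPair R h1 h2 L n).1 (nextPair R h1 h2 L n).2 ∧
    (nextPair R h1 h2 L n).1 ∉ L.map Prod.fst ∧
    (nextPair R h1 h2 L n).2 ∉ L.map Prod.snd := by
  unfold nextPair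
  by_cases h : n % 2 = 0
  · simp only [h, if_true]
    set i := sInf {i : ℕ | i ∉ L.map Prod.fst} with hi
    have hspec := (((h1 i).diff (L.map Prod.snd).finite_toSet).nonempty).choose_spec
    simp only [Set.mem_diff, Set.mem_setOf_eq, List.mem_toFinset] at hspec
    refine ⟨hspec.1, ?_, hspec.2⟩
    exact sInf_not_mem _
  · simp only [if_neg h]
    set j := sInf {j : ℕ | j ∉ L.map Prod.snd} with hj
    have hspec := (((h2 j).diff (L.map Prod.fst).finite_toSet).nonempty).choose_spec
    simp only [Set.mem_diff, Set.mem_setOf_eq] at hspec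
    exact ⟨hspec.1, hspec.2, sInf_not_mem _⟩

lemma nextPair_even (R : ℕ → ℕ → Prop) (h1 : ∀ i, {j | R i j}.Infinite)
    (h2 : ∀ j, {i | R i j}.Infinite) (L : List (ℕ × ℕ)) (n : ℕ) (h : n % 2 = 0) :
    (nextPair R h1 h2 L n).1 = sInf {i : ℕ | i ∉ L.map Prod.fst} := by
  unfold nextPair; simp [h]

lemma nextPair_odd (R : ℕ → ℕ → Prop) (h1 : ∀ i, {j | R i j}.Infinite)
    (h2 : ∀ j, {i | R i j}.Infinite) (L : List (ℕ × ℕ)) (n : ℕ) (h : n % 2 = 1) :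
    (nextPair R h1 h2 L n).2 = sInf {j : ℕ | j ∉ L.map Prod.snd} := by
  unfold nextPair; simp [h]

noncomputable def chain (R : ℕ → ℕ → Prop)
    (h1 : ∀ i, {j | R i j}.Infinite) (h2 : ∀ j, {i | R i j}.Infinite) :
    ℕ → List (ℕ × ℕ)
  | 0 => []
  | n+1 => chain R h1 h2 n ++ [nextPair R h1 h2 (chain R h1 h2 n) n]

variable {R : ℕ → ℕ → Prop} {h1 : ∀ i, {j | R i j}.Infinite} {h2 : ∀ j, {i | R i j}.Infinite}

lemma mem_chain_succ (p : ℕ × ℕ) (n : ℕ) :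
    p ∈ chain R h1 h2 (n+1) ↔ p ∈ chain R h1 h2 n ∨
      p = nextPair R h1 h2 (chain R h1 h2 n) n := by
  simp [chain]

lemma chain_mono {m n : ℕ} (h : m ≤ n) (p : ℕ × ℕ) (hp : p ∈ chain R h1 h2 m) :
    p ∈ chain R h1 h2 n := by
  induction n with
  | zero => exact (Nat.le_zero.mp h) ▸ hp
  | succ n ih =>
    rcases Nat.lt_or_ge m (n+1) with h' | h'
    · exact (mem_chain_succ p n).mpr (Or.inl (ih (by omega)))
    · have : m = n + 1 := le_antisymm h h'
      exact this ▸ hp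

lemma mem_chain_iff (p : ℕ × ℕ) (n : ℕ) :
    p ∈ chain R h1 h2 n ↔ ∃ m < n, p = nextPair R h1 h2 (chain R h1 h2 m) m := by
  induction n with
  | zero => simp [chain]
  | succ n ih =>
    rw [mem_chain_succ, ih]
    constructor
    · rintro (⟨m, hm, rfl⟩ | rfl)
      · exact ⟨m, by omega, rfl⟩
      · exact ⟨n, by omega, rfl⟩
    · rintro ⟨m, hm, rfl⟩
      rcases Nat.lt_or_ge m n with h' | h'
      · exact Or.inl ⟨m, h', rfl⟩
      · have : m = n := by omega
        subst this; exact Or.inr rfl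

noncomputable def pp (R : ℕ → ℕ → Prop)
    (h1 : ∀ i, {j | R i j}.Infinite) (h2 : ∀ j, {i | R i j}.Infinite) (n : ℕ) : ℕ × ℕ :=
  nextPair R h1 h2 (chain R h1 h2 n) n

lemma pp_R (n : ℕ) : R (pp R h1 h2 n).1 (pp R h1 h2 n).2 :=
  (nextPair_spec R h1 h2 _ n).1

lemma pp_fst_new (n : ℕ) : (pp R h1 h2 n).1 ∉ (chain R h1 h2 n).map Prod.fst :=
  (nextPair_spec R h1 h2 _ n).2.1

lemma pp_snd_new (n : ℕ) : (pp R h1 h2 n).2 ∉ (chain R h1 h2 n).map Prod.snd :=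
  (nextPair_spec R h1 h2 _ n).2.2

lemma pp_mem_chain {m n : ℕ} (h : m < n) : pp R h1 h2 m ∈ chain R h1 h2 n :=
  (mem_chain_iff _ n).mpr ⟨m, h, rfl⟩

lemma pp_fst_injective : Function.Injective (fun n => (pp R h1 h2 n).1) := by
  intro m n hmn
  by_contra hne
  wlog h : m < n generalizing m n
  · exact this hmn.symm (Ne.symm hne) (by omega)
  · apply pp_fst_new (R := R) (h1 := h1) (h2 := h2) n
    have he : (pp R h1 h2 n).1 = (pp R h1 h2 m).1 := hmn.symm
    rw [he]
    exact List.mem_map_of_mem (f := Prod.fst) (pp_mem_chain h)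

lemma pp_snd_injective : Function.Injective (fun n => (pp R h1 h2 n).2) := by
  intro m n hmn
  by_contra hne
  wlog h : m < n generalizing m n
  · exact this hmn.symm (Ne.symm hne) (by omega)
  · apply pp_snd_new (R := R) (h1 := h1) (h2 := h2) n
    have he : (pp R h1 h2 n).2 = (pp R h1 h2 m).2 := hmn.symm
    rw [he]
    exact List.mem_map_of_mem (f := Prod.snd) (pp_mem_chain h)

lemma fst_mem_stage (k : ℕ) : ∀ i < k, i ∈ (chain R h1 h2 (2*k)).map Prod.fst := by
  induction k with
  | zero => intro i hi; omega
  | succ k ih =>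
    intro i hi
    have mono : ∀ q ∈ (chain R h1 h2 (2*k)).map Prod.fst,
        q ∈ (chain R h1 h2 (2*(k+1))).map Prod.fst := by
      intro q hq
      rcases List.mem_map.mp hq with ⟨p, hp, rfl⟩
      exact List.mem_map_of_mem (chain_mono (by omega) p hp)
    rcases Nat.lt_or_ge i k with h' | h'
    · exact mono i (ih i h')
    have hik : i = k := by omega
    subst hik
    by_cases hmem : i ∈ (chain R h1 h2 (2*i)).map Prod.fst
    · exact mono i hmem
    · -- step 2*i is even, picks sInf
      have heven : (2*i) % 2 = 0 := by omega
      have hval := nextPair_even R h1 h2 (chain R h1 h2 (2*i)) (2*i) heven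
      have hle : sInf {q : ℕ | q ∉ (chain R h1 h2 (2*i)).map Prod.fst} ≤ i :=
        Nat.sInf_le hmem
      have hmemInf := sInf_not_mem ((chain R h1 h2 (2*i)).map Prod.fst)
      have hge : ¬ sInf {q : ℕ | q ∉ (chain R h1 h2 (2*i)).map Prod.fst} < i := by
        intro hlt
        exact hmemInf (ih _ hlt)
      have heq : sInf {q : ℕ | q ∉ (chain R h1 h2 (2*i)).map Prod.fst} = i := by omega
      have : (pp R h1 h2 (2*i)).1 = i := by rw [pp, hval, heq]
      have hmem1 : pp R h1 h2 (2*i) ∈ chain R h1 h2 (2*(i+1)) := pp_mem_chain (by omega)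
      have hfinal : (pp R h1 h2 (2*i)).1 ∈ (chain R h1 h2 (2*(i+1))).map Prod.fst :=
        List.mem_map_of_mem hmem1
      rwa [this] at hfinal

lemma snd_mem_stage (k : ℕ) : ∀ j < k, j ∈ (chain R h1 h2 (2*k+1)).map Prod.snd := by
  induction k with
  | zero => intro j hj; omega
  | succ k ih =>
    intro j hj
    have mono : ∀ q ∈ (chain R h1 h2 (2*k+1)).map Prod.snd,
        q ∈ (chain R h1 h2 (2*(k+1)+1)).map Prod.snd := by
      intro q hq
      rcases List.mem_map.mp hq with ⟨p, hp, rfl⟩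
      exact List.mem_map_of_mem (chain_mono (by omega) p hp)
    rcases Nat.lt_or_ge j k with h' | h'
    · exact mono j (ih j h')
    have hik : j = k := by omega
    subst hik
    by_cases hmem : j ∈ (chain R h1 h2 (2*j+1)).map Prod.snd
    · exact mono j hmem
    · have hodd : (2*j+1) % 2 = 1 := by omega
      have hval := nextPair_odd R h1 h2 (chain R h1 h2 (2*j+1)) (2*j+1) hodd
      have hle : sInf {q : ℕ | q ∉ (chain R h1 h2 (2*j+1)).map Prod.snd} ≤ j :=
        Nat.sInf_le hmem
      have hmemInf := sInf_not_mem ((chain R h1 h2 (2*j+1)).map Prod.snd)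
      have hge : ¬ sInf {q : ℕ | q ∉ (chain R h1 h2 (2*j+1)).map Prod.snd} < j := by
        intro hlt
        exact hmemInf (ih _ hlt)
      have heq : sInf {q : ℕ | q ∉ (chain R h1 h2 (2*j+1)).map Prod.snd} = j := by omega
      have : (pp R h1 h2 (2*j+1)).2 = j := by rw [pp, hval, heq]
      have hmem1 : pp R h1 h2 (2*j+1) ∈ chain R h1 h2 (2*(j+1)+1) := pp_mem_chain (by omega)
      have hfinal : (pp R h1 h2 (2*j+1)).2 ∈ (chain R h1 h2 (2*(j+1)+1)).map Prod.snd :=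
        List.mem_map_of_mem hmem1
      rwa [this] at hfinal

lemma pp_fst_surjective : Function.Surjective (fun n => (pp R h1 h2 n).1) := by
  intro i
  have := fst_mem_stage (R := R) (h1 := h1) (h2 := h2) (i+1) i (by omega)
  rcases List.mem_map.mp this with ⟨p, hp, hpe⟩
  rcases (mem_chain_iff p _).mp hp with ⟨m, _, rfl⟩
  exact ⟨m, hpe⟩

lemma pp_snd_surjective : Function.Surjective (fun n => (pp R h1 h2 n).2) := by
  intro j
  have := snd_mem_stage (R := R) (h1 := h1) (h2 := h2) (j+1) j (by omega)
  rcases List.mem_map.mp this with ⟨p, hp, hpe⟩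
  rcases (mem_chain_iff p _).mp hp with ⟨m, _, rfl⟩
  exact ⟨m, hpe⟩

theorem matching (R : ℕ → ℕ → Prop)
    (h1 : ∀ i, {j | R i j}.Infinite) (h2 : ∀ j, {i | R i j}.Infinite) :
    ∃ π : ℕ ≃ ℕ, ∀ i, R i (π i) := by
  have hf : Function.Bijective (fun n => (pp R h1 h2 n).1) :=
    ⟨pp_fst_injective, pp_fst_surjective⟩
  have hg : Function.Bijective (fun n => (pp R h1 h2 n).2) :=
    ⟨pp_snd_injective, pp_snd_surjective⟩
  refine ⟨(Equiv.ofBijective _ hf).symm.trans (Equiv.ofBijective _ hg), ?_⟩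
  intro i
  have : (fun n => (pp R h1 h2 n).1) ((Equiv.ofBijective _ hf).symm i) = i :=
    (Equiv.ofBijective _ hf).apply_symm_apply i
  conv_lhs => rw [← this]
  exact pp_R _


lemma sphere_ball_infinite (Z : Type*) [NormedAddCommGroup Z] [NormedSpace ℝ Z]
    (Y : Submodule ℝ Z) (hYinf : ¬ FiniteDimensional ℝ Y)
    (z : Z) (hz : z ∈ Y) (hz1 : ‖z‖ = 1) (r : ℝ) (hr : 0 < r) :
    {u : Z | u ∈ Y ∧ ‖u‖ = 1 ∧ ‖z - u‖ < r}.Infinite := by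
  -- find w ∈ Y not in span {z}
  obtain ⟨w, hwY, hwspan⟩ : ∃ w, w ∈ Y ∧ w ∉ Submodule.span ℝ {z} := by
    by_contra h
    push_neg at h
    have hle : Y ≤ Submodule.span ℝ {z} := fun v hv => h v hv
    exact hYinf (Submodule.finiteDimensional_of_le hle)
  have hznz : z ≠ 0 := by
    intro h; rw [h] at hz1; simp at hz1
  have hwnz : w ≠ 0 := by
    intro h; exact hwspan (h ▸ (Submodule.span ℝ {z}).zero_mem)
  have hwn : 0 < ‖w‖ := norm_pos_iff.mpr hwnz
  -- for t > 0, z + t • w ≠ 0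
  have hne : ∀ t : ℝ, 0 < t → z + t • w ≠ 0 := by
    intro t ht h
    apply hwspan
    have : w = (-t⁻¹) • z := by
      have h2 : t • w = -z := by linear_combination (norm := module) h
      have h3 : w = t⁻¹ • (t • w) := by rw [smul_smul, inv_mul_cancel₀ ht.ne', one_smul]
      rw [h2] at h3
      rw [h3]; module
    rw [this]
    exact Submodule.smul_mem _ _ (Submodule.mem_span_singleton_self z)
  set f : ℝ → Z := fun t => ‖z + t • w‖⁻¹ • (z + t • w) with hf
  set t0 : ℝ := r / (2 * ‖w‖ + 1) with ht0
  have ht0pos : 0 < t0 := div_pos hr (by positivity)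
  -- properties of f on Ioo 0 t0
  have hmemY : ∀ t : ℝ, f t ∈ Y := fun t =>
    Submodule.smul_mem _ _ (Submodule.add_mem _ hz (Submodule.smul_mem _ _ hwY))
  have hnorm1 : ∀ t : ℝ, 0 < t → ‖f t‖ = 1 := by
    intro t ht
    have h1 : z + t • w ≠ 0 := hne t ht
    have h2 : 0 < ‖z + t • w‖ := norm_pos_iff.mpr h1
    simp only [hf, norm_smul, norm_inv, norm_norm]
    field_simp
  have hclose : ∀ t : ℝ, 0 < t → t < t0 → ‖z - f t‖ < r := by
    intro t ht htt0
    have h2 : 0 < ‖z + t • w‖ := norm_pos_iff.mpr (hne t ht)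
    have e1 : ‖z - (z + t • w)‖ = t * ‖w‖ := by
      simp [norm_smul, abs_of_pos ht]
    have e2 : ‖(z + t • w) - f t‖ = |‖z + t • w‖ - 1| := by
      have hid : (z + t • w) - f t = (1 - ‖z + t • w‖⁻¹) • (z + t • w) := by
        show (z + t • w) - ‖z + t • w‖⁻¹ • (z + t • w) = (1 - ‖z + t • w‖⁻¹) • (z + t • w)
        module
      rw [hid, norm_smul, Real.norm_eq_abs]
      rw [show |1 - ‖z + t • w‖⁻¹| * ‖z + t • w‖ = |(1 - ‖z + t • w‖⁻¹) * ‖z + t • w‖| by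
        rw [abs_mul, abs_of_pos h2]]
      rw [sub_mul, one_mul, inv_mul_cancel₀ h2.ne']
    have e3 : |‖z + t • w‖ - 1| ≤ t * ‖w‖ := by
      have := abs_norm_sub_norm_le (z + t • w) z
      rw [hz1] at this
      calc |‖z + t • w‖ - 1| ≤ ‖(z + t • w) - z‖ := this
        _ = t * ‖w‖ := by simp [norm_smul, abs_of_pos ht]
    calc ‖z - f t‖ ≤ ‖z - (z + t • w)‖ + ‖(z + t • w) - f t‖ := norm_sub_le_norm_sub_add_norm_sub _ _ _
      _ ≤ t * ‖w‖ + t * ‖w‖ := by rw [e1, e2]; linarith [e3]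
      _ < r := by
          have : t * (2 * ‖w‖ + 1) < t0 * (2 * ‖w‖ + 1) := by
            apply mul_lt_mul_of_pos_right htt0 (by positivity)
          rw [ht0, div_mul_cancel₀ _ (by positivity : (2 * ‖w‖ + 1) ≠ 0)] at this
          nlinarith
  have hinj : Set.InjOn f (Set.Ioo 0 t0) := by
    rintro s ⟨hs0, _⟩ t ⟨ht0', _⟩ hst
    by_contra hne'
    set a := ‖z + s • w‖ with ha
    set b := ‖z + t • w‖ with hb
    have hap : 0 < a := norm_pos_iff.mpr (hne s hs0)
    have hbp : 0 < b := norm_pos_iff.mpr (hne t ht0')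
    have key : (a⁻¹ - b⁻¹) • z + (a⁻¹ * s - b⁻¹ * t) • w = 0 := by
      have : a⁻¹ • (z + s • w) = b⁻¹ • (z + t • w) := hst
      linear_combination (norm := module) this
    have hcoef : a⁻¹ * s - b⁻¹ * t = 0 := by
      by_contra hc
      apply hwspan
      have : w = (-(a⁻¹ * s - b⁻¹ * t)⁻¹ * (a⁻¹ - b⁻¹)) • z := by
        have h4 : (a⁻¹ * s - b⁻¹ * t) • w = -((a⁻¹ - b⁻¹) • z) := by
          linear_combination (norm := module) key
        have h5 : w = (a⁻¹ * s - b⁻¹ * t)⁻¹ • ((a⁻¹ * s - b⁻¹ * t) • w) := by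
          rw [smul_smul, inv_mul_cancel₀ hc, one_smul]
        rw [h4] at h5
        rw [h5]; module
      rw [this]
      exact Submodule.smul_mem _ _ (Submodule.mem_span_singleton_self z)
    have hz0 : (a⁻¹ - b⁻¹) • z = 0 := by
      have : (a⁻¹ - b⁻¹) • z + (0:ℝ) • w = 0 := by rw [← hcoef]; exact key
      simpa using this
    have hab : a⁻¹ = b⁻¹ := by
      rcases smul_eq_zero.mp hz0 with h | h
      · linarith [sub_eq_zero.mp (by linarith [h] : a⁻¹ - b⁻¹ = 0)]
      · exact absurd h hznz
    have : a⁻¹ * s = a⁻¹ * t := by rw [hab] at hcoef ⊢; linarith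
    have : s = t := by
      have hai : a⁻¹ ≠ 0 := by positivity
      exact mul_left_cancel₀ hai this
    exact hne' this
  have himg : (f '' Set.Ioo 0 t0).Infinite :=
    (Set.Ioo_infinite ht0pos).image hinj
  apply himg.mono
  rintro u ⟨t, ⟨htl, htu⟩, rfl⟩
  exact ⟨hmemY t, hnorm1 t htl, hclose t htl htu⟩

open Classical in
lemma near_infinite (Z : Type*) [NormedAddCommGroup Z] [NormedSpace ℝ Z]
    (Y : Submodule ℝ Z) (hYinf : ¬ FiniteDimensional ℝ Y)
    (y : ℕ → Z) (hymem : ∀ i, y i ∈ Y ∧ ‖y i‖ = 1)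
    (hydense : ∀ z : Z, z ∈ Y → ‖z‖ = 1 → ∀ ε' > (0 : ℝ), ∃ i, ‖z - y i‖ < ε')
    (ε : ℝ) (hε : 0 < ε) (v : Z)
    (z : Z) (hzY : z ∈ Y) (hz1 : ‖z‖ = 1) (hvz : ‖v - z‖ < 2 * ε) :
    {j | ‖v - y j‖ < 2 * ε}.Infinite := by
  intro hfin
  set r : ℝ := 2 * ε - ‖v - z‖ with hrdef
  have hrpos : 0 < r := by simp [hrdef]; linarith
  have hsball := sphere_ball_infinite Z Y hYinf z hzY hz1 (r/2) (by linarith)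
  set T : Finset ℕ := hfin.toFinset with hT
  obtain ⟨u, ⟨huY, hu1, huz⟩, hunotin⟩ :=
    hsball.exists_notMem_finset (T.image y)
  set D : Finset ℝ := insert (r/2) (T.image (fun t => ‖u - y t‖)) with hD
  have hDne : D.Nonempty := ⟨r/2, Finset.mem_insert_self _ _⟩
  set d : ℝ := D.min' hDne with hd
  have hdpos : 0 < d := by
    apply (Finset.lt_min'_iff D hDne).mpr
    intro b hb
    rcases Finset.mem_insert.mp hb with rfl | hb
    · linarith
    · rcases Finset.mem_image.mp hb with ⟨t, htT, rfl⟩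
      have : u ≠ y t := by
        intro h
        exact hunotin (Finset.mem_image.mpr ⟨t, htT, h.symm⟩)
      have : u - y t ≠ 0 := sub_ne_zero.mpr this
      exact norm_pos_iff.mpr this
  have hdle : d ≤ r / 2 := Finset.min'_le _ _ (Finset.mem_insert_self _ _)
  obtain ⟨j, hj⟩ := hydense u huY hu1 d hdpos
  have hjin : ‖v - y j‖ < 2 * ε := by
    calc ‖v - y j‖ ≤ ‖v - z‖ + ‖z - u‖ + ‖u - y j‖ := by
          have h1 := norm_sub_le_norm_sub_add_norm_sub v z (y j)
          have h2 := norm_sub_le_norm_sub_add_norm_sub z u (y j)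
          linarith
      _ < ‖v - z‖ + r/2 + d := by linarith
      _ ≤ 2 * ε := by linarith
  have hjT : j ∈ T := hfin.mem_toFinset.mpr hjin
  have : d ≤ ‖u - y j‖ :=
    Finset.min'_le _ _ (Finset.mem_insert_of_mem (Finset.mem_image_of_mem _ hjT))
  linarith


lemma close_sphere (Z : Type*) [NormedAddCommGroup Z] [NormedSpace ℝ Z]
    (Y : Submodule ℝ Z) (ε : ℝ) (hε : 0 < ε) (v w : Z) (hv1 : ‖v‖ = 1)
    (hw : w ∈ Y) (hw1 : ‖w‖ ≤ 1) (hd : ‖v - w‖ < ε)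
    (y0 : Z) (hy0 : y0 ∈ Y) (hy01 : ‖y0‖ = 1) :
    ∃ z, z ∈ Y ∧ ‖z‖ = 1 ∧ ‖v - z‖ < 2 * ε := by
  rcases le_or_gt ε 1 with hle | hlt
  · have hnw : 1 - ε < ‖w‖ := by
      have := abs_norm_sub_norm_le v w
      rw [hv1] at this
      have h1 : 1 - ‖w‖ ≤ ‖v - w‖ := le_trans (le_abs_self _) this
      linarith
    have hwpos : 0 < ‖w‖ := by linarith
    have hwne : w ≠ 0 := norm_pos_iff.mp hwpos
    refine ⟨‖w‖⁻¹ • w, Submodule.smul_mem _ _ hw, ?_, ?_⟩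
    · rw [norm_smul, norm_inv, norm_norm, inv_mul_cancel₀ hwpos.ne']
    · have hwz : ‖w - ‖w‖⁻¹ • w‖ = 1 - ‖w‖ := by
        have hid : w - ‖w‖⁻¹ • w = (1 - ‖w‖⁻¹) • w := by module
        rw [hid, norm_smul, Real.norm_eq_abs]
        rw [show |1 - ‖w‖⁻¹| * ‖w‖ = |(1 - ‖w‖⁻¹) * ‖w‖| by rw [abs_mul, abs_of_pos hwpos]]
        rw [sub_mul, one_mul, inv_mul_cancel₀ hwpos.ne']
        rw [abs_of_nonpos (by linarith)]
        ring
      have h1mw : 1 - ‖w‖ ≤ ‖v - w‖ := by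
        have := abs_norm_sub_norm_le v w
        rw [hv1] at this
        exact le_trans (le_abs_self _) this
      calc ‖v - ‖w‖⁻¹ • w‖ ≤ ‖v - w‖ + ‖w - ‖w‖⁻¹ • w‖ :=
            norm_sub_le_norm_sub_add_norm_sub _ _ _
        _ = ‖v - w‖ + (1 - ‖w‖) := by rw [hwz]
        _ < 2 * ε := by linarith
  · refine ⟨y0, hy0, hy01, ?_⟩
    calc ‖v - y0‖ ≤ ‖v‖ + ‖y0‖ := norm_sub_le _ _
      _ = 2 := by rw [hv1, hy01]; norm_num
      _ < 2 * ε := by linarith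

/- Context: for subsets A, B of a metric space, ρ_H(A,B) is the Hausdorff distance.
The unit sphere of a normed space X is {x : ‖x‖ = 1}, the closed unit ball is
{x : ‖x‖ ≤ 1}.  X and Y are infinite-dimensional closed linear subspaces of a real
Banach space Z, and their unit balls (as subsets of Z) are at Hausdorff distance < ε. -/

theorem stmt10 (Z : Type*) [NormedAddCommGroup Z] [NormedSpace ℝ Z] [CompleteSpace Z]
    (X Y : Submodule ℝ Z)
    (hXc : IsClosed (X : Set Z)) (hYc : IsClosed (Y : Set Z))
    (hXinf : ¬ FiniteDimensional ℝ X) (hYinf : ¬ FiniteDimensional ℝ Y)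
    (ε : ℝ) (hε : 0 < ε)
    (hH : Metric.hausdorffDist
      {z : Z | z ∈ X ∧ ‖z‖ ≤ 1} {z : Z | z ∈ Y ∧ ‖z‖ ≤ 1} < ε)
    (x y : ℕ → Z)
    (hxmem : ∀ i, x i ∈ X ∧ ‖x i‖ = 1) (hymem : ∀ i, y i ∈ Y ∧ ‖y i‖ = 1)
    (hxdense : ∀ z : Z, z ∈ X → ‖z‖ = 1 → ∀ ε' > (0 : ℝ), ∃ i, ‖z - x i‖ < ε')
    (hydense : ∀ z : Z, z ∈ Y → ‖z‖ = 1 → ∀ ε' > (0 : ℝ), ∃ i, ‖z - y i‖ < ε') :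
    ∃ π : ℕ ≃ ℕ, ∀ (F : Finset ℕ), F.Nonempty → ∀ δ : ℕ → ℝ,
      (∀ i ∈ F, δ i = 1 ∨ δ i = -1) →
      |‖∑ i ∈ F, δ i • x i‖ - ‖∑ i ∈ F, δ i • y (π i)‖| < 2 * F.card * ε := by
  set S : Set Z := {z : Z | z ∈ X ∧ ‖z‖ ≤ 1} with hS
  set T : Set Z := {z : Z | z ∈ Y ∧ ‖z‖ ≤ 1} with hT
  have hSne : S.Nonempty := ⟨0, X.zero_mem, by simp⟩
  have hTne : T.Nonempty := ⟨0, Y.zero_mem, by simp⟩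
  have hSb : Bornology.IsBounded S :=
    (Metric.isBounded_closedBall (x := (0:Z)) (r := 1)).subset
      (fun z hz => mem_closedBall_zero_iff.mpr hz.2)
  have hTb : Bornology.IsBounded T :=
    (Metric.isBounded_closedBall (x := (0:Z)) (r := 1)).subset
      (fun z hz => mem_closedBall_zero_iff.mpr hz.2)
  have hfin : EMetric.hausdorffEdist S T ≠ ⊤ :=
    Metric.hausdorffEdist_ne_top_of_nonempty_of_bounded hSne hTne hSb hTb
  have hfin' : EMetric.hausdorffEdist T S ≠ ⊤ := by
    show Metric.hausdorffEDist T S ≠ ⊤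
    rw [EMetric.hausdorffEdist_comm]
    exact hfin
  have hH' : Metric.hausdorffDist T S < ε := by
    rwa [Metric.hausdorffDist_comm]
  have h1 : ∀ i, {j | ‖x i - y j‖ < 2 * ε}.Infinite := by
    intro i
    obtain ⟨w, hwT, hdw⟩ := Metric.exists_dist_lt_of_hausdorffDist_lt
      (show x i ∈ S from ⟨(hxmem i).1, le_of_eq (hxmem i).2⟩) hH hfin
    rw [dist_eq_norm] at hdw
    obtain ⟨z, hzY, hz1, hvz⟩ := close_sphere Z Y ε hε (x i) w (hxmem i).2
      hwT.1 hwT.2 hdw (y 0) (hymem 0).1 (hymem 0).2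
    exact near_infinite Z Y hYinf y hymem hydense ε hε (x i) z hzY hz1 hvz
  have h2 : ∀ j, {i | ‖x i - y j‖ < 2 * ε}.Infinite := by
    intro j
    obtain ⟨w, hwS, hdw⟩ := Metric.exists_dist_lt_of_hausdorffDist_lt
      (show y j ∈ T from ⟨(hymem j).1, le_of_eq (hymem j).2⟩) hH' hfin'
    rw [dist_eq_norm] at hdw
    obtain ⟨z, hzX, hz1, hvz⟩ := close_sphere Z X ε hε (y j) w (hymem j).2
      hwS.1 hwS.2 hdw (x 0) (hxmem 0).1 (hxmem 0).2
    have := near_infinite Z X hXinf x hxmem hxdense ε hε (y j) z hzX hz1 hvz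
    have hseteq : {i | ‖y j - x i‖ < 2 * ε} = {i | ‖x i - y j‖ < 2 * ε} := by
      ext i; simp only [Set.mem_setOf_eq, norm_sub_rev]
    rwa [hseteq] at this
  obtain ⟨π, hπ⟩ := matching (fun i j => ‖x i - y j‖ < 2 * ε) h1 h2
  refine ⟨π, ?_⟩
  intro F hF δ hδ
  have habs : ∀ i ∈ F, |δ i| = 1 := by
    intro i hi
    rcases hδ i hi with h | h <;> rw [h] <;> norm_num
  calc |‖∑ i ∈ F, δ i • x i‖ - ‖∑ i ∈ F, δ i • y (π i)‖|
      ≤ ‖∑ i ∈ F, δ i • x i - ∑ i ∈ F, δ i • y (π i)‖ := abs_norm_sub_norm_le _ _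
    _ = ‖∑ i ∈ F, δ i • (x i - y (π i))‖ := by
        rw [← Finset.sum_sub_distrib]
        congr 1
        exact Finset.sum_congr rfl (fun i _ => (smul_sub (δ i) (x i) (y (π i))).symm)
    _ ≤ ∑ i ∈ F, ‖δ i • (x i - y (π i))‖ := norm_sum_le _ _
    _ = ∑ i ∈ F, ‖x i - y (π i)‖ :=
        Finset.sum_congr rfl (fun i hi => by
          rw [norm_smul, Real.norm_eq_abs, habs i hi, one_mul])
    _ < ∑ _i ∈ F, (2 * ε) := Finset.sum_lt_sum_of_nonempty hF (fun i _ => hπ i)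
    _ = F.card * (2 * ε) := by rw [Finset.sum_const, nsmul_eq_mul]
    _ = 2 * F.card * ε := by ring
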